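/- Let X be a Polish space and P, Q Borel probability measures on X. Then the relative entropy admits the variational representation H(Q|P) = sup over bounded continuous f of (∫ f dQ − log ∫ e^f dP). -/

import Mathlib

open MeasureTheory Classical
open scoped ENNReal BoundedContinuousFunction

section DVProofs
open Real
section DVAux
variable {α : Type*} [MeasurableSpace α] {μ ν : Measure α}

lemma dv_exp_lip {a b c : ℝ} (ha : a ≤ c) (hb : b ≤ c) :
    |Real.exp a - Real.exp b| ≤ Real.exp c * |a - b| := by
  wlog h : b ≤ a generalizing a b
  · rw [abs_sub_comm, abs_sub_comm a b]; exact this hb ha (le_of_not_ge h)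
  rw [abs_of_nonneg (sub_nonneg.2 (exp_le_exp.2 h)), abs_of_nonneg (sub_nonneg.2 h)]
  have h1 : 1 - (a - b) ≤ Real.exp (b - a) := by
    have := Real.add_one_le_exp (b - a); linarith
  have h2 : Real.exp a * (1 - (a - b)) ≤ Real.exp b := by
    calc Real.exp a * (1 - (a - b)) ≤ Real.exp a * Real.exp (b - a) :=
          mul_le_mul_of_nonneg_left h1 (Real.exp_pos a).le
      _ = Real.exp b := by rw [← Real.exp_add]; ring_nf
  have h3 : Real.exp a ≤ Real.exp c := exp_le_exp.2 ha
  nlinarith [mul_le_mul_of_nonneg_right h3 (sub_nonneg.2 h)]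

lemma dv_lintegral_inv_rnDeriv [SigmaFinite μ] [SigmaFinite ν] (h : μ ≪ ν) :
    ∫⁻ x, (μ.rnDeriv ν x)⁻¹ ∂μ ≤ ν Set.univ := by
  have h1 : ∫⁻ x, (μ.rnDeriv ν x)⁻¹ ∂(ν.withDensity (μ.rnDeriv ν)) ≤ ν Set.univ := by
    erw [lintegral_withDensity_eq_lintegral_mul _ (Measure.measurable_rnDeriv μ ν)
      (Measure.measurable_rnDeriv μ ν).inv]
    calc ∫⁻ x, ((μ.rnDeriv ν) * (μ.rnDeriv ν)⁻¹) x ∂ν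
        ≤ ∫⁻ _, 1 ∂ν := lintegral_mono fun x => by
          simpa using ENNReal.mul_inv_le_one (μ.rnDeriv ν x)
      _ = ν Set.univ := lintegral_one
  rwa [Measure.withDensity_rnDeriv_eq μ ν h] at h1

lemma dv_integrable_inv [IsProbabilityMeasure μ] [IsProbabilityMeasure ν] (h : μ ≪ ν) :
    Integrable (fun x ↦ ((μ.rnDeriv ν x).toReal)⁻¹) μ := by
  have heq : (fun x ↦ ((μ.rnDeriv ν x).toReal)⁻¹) = fun x ↦ ((μ.rnDeriv ν x)⁻¹).toReal := by
    ext x; rw [ENNReal.toReal_inv]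
  rw [heq]
  refine integrable_toReal_of_lintegral_ne_top (Measure.measurable_rnDeriv μ ν).inv.aemeasurable ?_
  exact ne_top_of_le_ne_top (by simp) (dv_lintegral_inv_rnDeriv h)

lemma dv_integral_inv_le [IsProbabilityMeasure μ] [IsProbabilityMeasure ν] (h : μ ≪ ν) :
    ∫ x, ((μ.rnDeriv ν x).toReal)⁻¹ ∂μ ≤ 1 := by
  have heq : (fun x ↦ ((μ.rnDeriv ν x).toReal)⁻¹) = fun x ↦ ((μ.rnDeriv ν x)⁻¹).toReal := by
    ext x; rw [ENNReal.toReal_inv]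
  have hlt : ∀ᵐ x ∂μ, (μ.rnDeriv ν x)⁻¹ < ∞ := by
    filter_upwards [Measure.rnDeriv_pos h] with x hx
    exact ENNReal.inv_lt_top.2 hx
  erw [heq, integral_toReal (Measure.measurable_rnDeriv μ ν).inv.aemeasurable hlt]
  calc (∫⁻ x, (μ.rnDeriv ν x)⁻¹ ∂μ).toReal ≤ (ν Set.univ).toReal :=
        ENNReal.toReal_mono (by simp) (dv_lintegral_inv_rnDeriv h)
    _ = 1 := by simp

lemma dv_integral_llr_nonneg [IsProbabilityMeasure μ] [IsProbabilityMeasure ν] (h : μ ≪ ν)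
    (hint : Integrable (llr μ ν) μ) : 0 ≤ ∫ x, llr μ ν x ∂μ := by
  have hinv := dv_integrable_inv h
  have hone : Integrable (fun x ↦ 1 - ((μ.rnDeriv ν x).toReal)⁻¹) μ := (integrable_const 1).sub hinv
  have hae : ∀ᵐ x ∂μ, 1 - ((μ.rnDeriv ν x).toReal)⁻¹ ≤ llr μ ν x := by
    filter_upwards [Measure.rnDeriv_pos h, h.ae_le (Measure.rnDeriv_lt_top μ ν)] with x h0 hlt
    have hd : 0 < (μ.rnDeriv ν x).toReal := ENNReal.toReal_pos h0.ne' hlt.ne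
    simpa [llr] using Real.one_sub_inv_le_log_of_pos hd
  have hmono := integral_mono_ae hone hint hae
  have h2 := dv_integral_inv_le h
  rw [integral_sub (integrable_const 1) hinv] at hmono
  simp only [integral_const, probReal_univ, ENNReal.toReal_one, smul_eq_mul, one_mul] at hmono
  linarith

lemma dv_integrable_min [IsProbabilityMeasure μ] [IsProbabilityMeasure ν] (h : μ ≪ ν) :
    Integrable (fun x ↦ min (llr μ ν x) 0) μ := by
  refine (dv_integrable_inv h).mono
    (((measurable_llr μ ν).min measurable_const).aestronglyMeasurable) ?_
  filter_upwards [Measure.rnDeriv_pos h, h.ae_le (Measure.rnDeriv_lt_top μ ν)] with x h0 hlt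
  have hd : 0 < (μ.rnDeriv ν x).toReal := ENNReal.toReal_pos h0.ne' hlt.ne
  rw [Real.norm_eq_abs, Real.norm_eq_abs, abs_of_nonneg (inv_nonneg.2 hd.le),
    abs_of_nonpos (min_le_right _ _)]
  rcases le_or_gt 1 ((μ.rnDeriv ν x).toReal) with h1 | h1
  · have : 0 ≤ llr μ ν x := by simpa [llr] using Real.log_nonneg h1
    rw [min_eq_right this]
    simpa using (inv_nonneg.2 hd.le)
  · have hlog : -llr μ ν x ≤ ((μ.rnDeriv ν x).toReal)⁻¹ := by
      have := Real.log_le_sub_one_of_pos (inv_pos.2 hd)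
      rw [Real.log_inv] at this
      have h2 : (0:ℝ) < ((μ.rnDeriv ν x).toReal)⁻¹ := inv_pos.2 hd
      simp only [llr]
      linarith
    rcases le_total (llr μ ν x) 0 with h2 | h2
    · rw [min_eq_left h2]; exact hlog
    · rw [min_eq_right h2]; simpa using (inv_nonneg.2 hd.le)

lemma dv_integral_min_ge [IsProbabilityMeasure μ] [IsProbabilityMeasure ν] (h : μ ≪ ν) :
    -1 ≤ ∫ x, min (llr μ ν x) 0 ∂μ := by
  have hinv := dv_integrable_inv h
  have hae : ∀ᵐ x ∂μ, -((μ.rnDeriv ν x).toReal)⁻¹ ≤ min (llr μ ν x) 0 := by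
    filter_upwards [Measure.rnDeriv_pos h, h.ae_le (Measure.rnDeriv_lt_top μ ν)] with x h0 hlt
    have hd : 0 < (μ.rnDeriv ν x).toReal := ENNReal.toReal_pos h0.ne' hlt.ne
    have h1 : 1 - ((μ.rnDeriv ν x).toReal)⁻¹ ≤ llr μ ν x := by
      simpa [llr] using Real.one_sub_inv_le_log_of_pos hd
    have h2 : (0:ℝ) ≤ ((μ.rnDeriv ν x).toReal)⁻¹ := inv_nonneg.2 hd.le
    exact le_min (by linarith) (by linarith)
  have hmono := integral_mono_ae hinv.neg (dv_integrable_min h) hae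
  simp only [Pi.neg_apply] at hmono
  rw [integral_neg] at hmono
  have h2 := dv_integral_inv_le h
  linarith

end DVAux

open MeasureTheory Real
open scoped ENNReal

section DVMain
variable {X : Type*} [MeasurableSpace X]

lemma dv_integrable_of_bound (μ : Measure X) [IsFiniteMeasure μ] {f : X → ℝ}
    (hf : AEStronglyMeasurable f μ) {c : ℝ} (hfc : ∀ x, |f x| ≤ c) : Integrable f μ :=
  (integrable_const c).mono' hf (Filter.Eventually.of_forall fun x => by
    simpa [Real.norm_eq_abs] using hfc x)

lemma dv_le_entropy (P Q : Measure X) [IsProbabilityMeasure P] [IsProbabilityMeasure Q]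
    (hQP : Q ≪ P) (hint : Integrable (llr Q P) Q) {f : X → ℝ} (hfm : Measurable f)
    {c : ℝ} (hfc : ∀ x, |f x| ≤ c) :
    ∫ x, f x ∂Q - Real.log (∫ x, Real.exp (f x) ∂P) ≤ ∫ x, llr Q P x ∂Q := by
  have hfQ : Integrable f Q := dv_integrable_of_bound Q hfm.aestronglyMeasurable hfc
  have hef : Integrable (fun x ↦ Real.exp (f x)) P := by
    refine dv_integrable_of_bound P (Real.measurable_exp.comp hfm).aestronglyMeasurable
      (c := Real.exp c) (fun x => ?_)
    rw [abs_of_pos (Real.exp_pos _)]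
    exact Real.exp_le_exp.2 ((abs_le.1 (hfc x)).2)
  haveI : IsProbabilityMeasure (P.tilted f) := isProbabilityMeasure_tilted hef
  have hQt : Q ≪ P.tilted f := hQP.trans (absolutelyContinuous_tilted hef)
  have hit : Integrable (llr Q (P.tilted f)) Q := integrable_llr_tilted_right hQP hfQ hint hef
  have hkey := integral_llr_tilted_right hQP hfQ hef hint
  have hgibbs := dv_integral_llr_nonneg hQt hit
  linarith

end DVMain
section DVApprox
variable {X : Type*} [MetricSpace X] [MeasurableSpace X] [BorelSpace X]
  [TopologicalSpace.SeparableSpace X]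

lemma dv_approx (P Q : Measure X) [IsProbabilityMeasure P] [IsProbabilityMeasure Q]
    {f : X → ℝ} (hfm : Measurable f) {c : ℝ} (hc : 0 ≤ c) (hfc : ∀ x, |f x| ≤ c)
    {ε : ℝ} (hε : 0 < ε) :
    ∃ g : X →ᵇ ℝ, ∫ x, f x ∂Q - Real.log (∫ x, Real.exp (f x) ∂P) - ε
      ≤ ∫ x, g x ∂Q - Real.log (∫ x, Real.exp (g x) ∂P) := by
  set δ := ε / (1 + Real.exp (2*c)) with hδdef
  have hδpos : 0 < δ := div_pos hε (by positivity)
  have hδε : δ * (1 + Real.exp (2*c)) = ε := by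
    rw [hδdef]; field_simp
  have hfiPQ : Integrable f (P + Q) := dv_integrable_of_bound _ hfm.aestronglyMeasurable hfc
  obtain ⟨g₀, hg₀, hg₀i⟩ := hfiPQ.exists_boundedContinuous_integral_sub_le hδpos
  -- clamp g₀ to [-c, c]
  let g : X →ᵇ ℝ := BoundedContinuousFunction.mkOfBound
    ⟨fun x ↦ max (min (g₀ x) c) (-c),
      (g₀.continuous.min continuous_const).max continuous_const⟩
    (2*c) (fun x y => by
      simp only [ContinuousMap.coe_mk, Real.dist_eq]
      have h1 : max (min (g₀ x) c) (-c) ≤ c := max_le (min_le_right _ _) (by linarith)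
      have h2 : -c ≤ max (min (g₀ x) c) (-c) := le_max_right _ _
      have h3 : max (min (g₀ y) c) (-c) ≤ c := max_le (min_le_right _ _) (by linarith)
      have h4 : -c ≤ max (min (g₀ y) c) (-c) := le_max_right _ _
      exact abs_sub_le_iff.2 ⟨by linarith, by linarith⟩)
  have hgval : ∀ x, g x = max (min (g₀ x) c) (-c) := fun x => rfl
  have hgle : ∀ x, g x ≤ c := fun x => max_le (min_le_right _ _) (by linarith)
  have hgge : ∀ x, -c ≤ g x := fun x => le_max_right _ _
  have hgc : ∀ x, |g x| ≤ c := fun x => abs_le.2 ⟨hgge x, hgle x⟩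
  have hgm : Measurable fun x => g x := g.continuous.measurable
  -- pointwise closeness
  have hclose : ∀ x, |f x - g x| ≤ |f x - g₀ x| := by
    intro x
    have h1 : f x = max (min (f x) c) (-c) := by
      rw [min_eq_left (abs_le.1 (hfc x)).2, max_eq_left (abs_le.1 (hfc x)).1]
    calc |f x - g x| = |max (min (f x) c) (-c) - max (min (g₀ x) c) (-c)| := by
          rw [hgval, ← h1]
      _ ≤ |min (f x) c - min (g₀ x) c| := abs_max_sub_max_le_abs _ _ _
      _ ≤ |f x - g₀ x| := by
          have h2 := abs_min_sub_min_le_max (f x) c (g₀ x) c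
          simpa using h2
  -- integrability of everything
  have hfgabs_meas : Measurable fun x => |f x - g x| := (hfm.sub hgm).abs
  have hInt1 : Integrable (fun x ↦ |f x - g x|) (P + Q) :=
    dv_integrable_of_bound _ hfgabs_meas.aestronglyMeasurable (c := 2*c) (fun x => by
      have := hfc x; have := hgc x
      rw [abs_abs]
      rw [abs_le] at *
      constructor <;> [linarith; linarith])
  have hInt0 : Integrable (fun x ↦ |f x - g₀ x|) (P + Q) := (hfiPQ.sub hg₀i).abs
  have hL1 : ∫ x, |f x - g x| ∂(P + Q) ≤ δ := by
    calc ∫ x, |f x - g x| ∂(P + Q) ≤ ∫ x, |f x - g₀ x| ∂(P + Q) :=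
          integral_mono hInt1 hInt0 hclose
      _ ≤ δ := by simpa [Real.norm_eq_abs] using hg₀
  have hInt1P : Integrable (fun x ↦ |f x - g x|) P := hInt1.left_of_add_measure
  have hInt1Q : Integrable (fun x ↦ |f x - g x|) Q := hInt1.right_of_add_measure
  have hsplit : ∫ x, |f x - g x| ∂(P + Q) = ∫ x, |f x - g x| ∂P + ∫ x, |f x - g x| ∂Q :=
    integral_add_measure hInt1P hInt1Q
  have hL1P : ∫ x, |f x - g x| ∂P ≤ δ := by
    have h2 : 0 ≤ ∫ x, |f x - g x| ∂Q := integral_nonneg fun x => abs_nonneg _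
    linarith [hL1, hsplit]
  have hL1Q : ∫ x, |f x - g x| ∂Q ≤ δ := by
    have h2 : 0 ≤ ∫ x, |f x - g x| ∂P := integral_nonneg fun x => abs_nonneg _
    linarith [hL1, hsplit]
  -- exp integrals
  have hefP : Integrable (fun x ↦ Real.exp (f x)) P := by
    refine dv_integrable_of_bound P (Real.measurable_exp.comp hfm).aestronglyMeasurable
      (c := Real.exp c) (fun x => ?_)
    rw [abs_of_pos (Real.exp_pos _)]
    exact Real.exp_le_exp.2 ((abs_le.1 (hfc x)).2)
  have hegP : Integrable (fun x ↦ Real.exp (g x)) P := by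
    refine dv_integrable_of_bound P (Real.measurable_exp.comp hgm).aestronglyMeasurable
      (c := Real.exp c) (fun x => ?_)
    rw [abs_of_pos (Real.exp_pos _)]
    exact Real.exp_le_exp.2 (hgle x)
  have hA : Real.exp (-c) ≤ ∫ x, Real.exp (f x) ∂P := by
    have := integral_mono (integrable_const (Real.exp (-c))) hefP
      (fun x => Real.exp_le_exp.2 (abs_le.1 (hfc x)).1)
    simpa using this
  have hB : Real.exp (-c) ≤ ∫ x, Real.exp (g x) ∂P := by
    have := integral_mono (integrable_const (Real.exp (-c))) hegP
      (fun x => Real.exp_le_exp.2 (hgge x))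
    simpa using this
  have hApos : 0 < ∫ x, Real.exp (f x) ∂P := lt_of_lt_of_le (Real.exp_pos _) hA
  have hBpos : 0 < ∫ x, Real.exp (g x) ∂P := lt_of_lt_of_le (Real.exp_pos _) hB
  -- compare exp integrals
  have hdiff : ∫ x, Real.exp (g x) ∂P ≤ ∫ x, Real.exp (f x) ∂P + Real.exp c * δ := by
    have h1 : ∀ x, Real.exp (g x) ≤ Real.exp (f x) + Real.exp c * |f x - g x| := by
      intro x
      have h2 := dv_exp_lip (hgle x) ((abs_le.1 (hfc x)).2)
      rw [abs_sub_comm (g x) (f x)] at h2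
      have h3 := le_abs_self (Real.exp (g x) - Real.exp (f x))
      have h4 := abs_sub_comm (Real.exp (g x)) (Real.exp (f x))
      linarith [h3.trans_eq h4]
    have h2 : ∫ x, Real.exp (g x) ∂P
        ≤ ∫ x, (Real.exp (f x) + Real.exp c * |f x - g x|) ∂P :=
      integral_mono hegP (hefP.add (hInt1P.const_mul _)) h1
    rw [integral_add hefP (hInt1P.const_mul _), integral_const_mul] at h2
    nlinarith [Real.exp_pos c]
  -- log comparison
  have hlog : Real.log (∫ x, Real.exp (g x) ∂P)
      ≤ Real.log (∫ x, Real.exp (f x) ∂P) + Real.exp (2*c) * δ := by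
    set A := ∫ x, Real.exp (f x) ∂P
    set B := ∫ x, Real.exp (g x) ∂P
    have h1 : Real.log B ≤ Real.log (A + Real.exp c * δ) := Real.log_le_log hBpos hdiff
    have h2 : Real.log (A + Real.exp c * δ) - Real.log A ≤ (Real.exp c * δ) / A := by
      rw [← Real.log_div (by positivity) (ne_of_gt hApos)]
      have h3 := Real.log_le_sub_one_of_pos (show 0 < (A + Real.exp c * δ)/A by positivity)
      have h4 : (A + Real.exp c * δ)/A - 1 = (Real.exp c * δ)/A := by field_simp; ring
      linarith
    have h5 : (Real.exp c * δ)/A ≤ Real.exp (2*c) * δ := by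
      have hAinv : 1/A ≤ Real.exp c := by
        have h6 : 1/A ≤ 1/Real.exp (-c) := one_div_le_one_div_of_le (Real.exp_pos _) hA
        have h7 : 1/Real.exp (-c) = Real.exp c := by
          rw [Real.exp_neg]; field_simp
        rwa [h7] at h6
      calc (Real.exp c * δ)/A = (Real.exp c * δ) * (1/A) := by ring
        _ ≤ (Real.exp c * δ) * Real.exp c := by
            apply mul_le_mul_of_nonneg_left hAinv (by positivity)
        _ = Real.exp (2*c) * δ := by rw [two_mul, Real.exp_add]; ring
    linarith
  -- Q integrals
  have hfQ : Integrable f Q := dv_integrable_of_bound Q hfm.aestronglyMeasurable hfc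
  have hgQ : Integrable (fun x => g x) Q := dv_integrable_of_bound Q hgm.aestronglyMeasurable hgc
  have hQint : ∫ x, f x ∂Q ≤ ∫ x, g x ∂Q + δ := by
    have h1 : ∫ x, (f x - g x) ∂Q ≤ ∫ x, |f x - g x| ∂Q :=
      integral_mono (hfQ.sub hgQ) hInt1Q (fun x => le_abs_self _)
    rw [integral_sub hfQ hgQ] at h1
    linarith
  exact ⟨g, by linarith⟩

end DVApprox

section DVReach
variable {X : Type*} [MeasurableSpace X]

lemma dv_clamp_abs {t n : ℝ} (hn : 0 ≤ n) : |max (min t n) (-n)| ≤ |t| := by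
  refine abs_le.2 ⟨?_, ?_⟩
  · refine le_max_of_le_left (le_min ?_ ?_)
    · exact neg_abs_le t
    · exact le_trans (neg_nonpos.2 (abs_nonneg t)) hn
  · exact max_le ((min_le_left t n).trans (le_abs_self t))
      ((neg_nonpos.2 hn).trans (abs_nonneg t))

lemma dv_clamp_abs_le {t n : ℝ} (hn : 0 ≤ n) : |max (min t n) (-n)| ≤ n :=
  abs_le.2 ⟨le_max_right _ _, max_le (min_le_right _ _) (by linarith)⟩

/-- Key truncation lemma: there is a bounded measurable function whose Donsker-Varadhan
value is at least `∫ clamp_n (llr) dQ - exp (-n)`. -/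
lemma dv_reach_ac (P Q : Measure X) [IsProbabilityMeasure P] [IsProbabilityMeasure Q]
    (hQP : Q ≪ P) (n : ℕ) :
    ∃ f : X → ℝ, Measurable f ∧ (∀ x, |f x| ≤ n) ∧
      ∫ x, max (min (llr Q P x) n) (-(n:ℝ)) ∂Q - Real.exp (-(n:ℝ))
        ≤ ∫ x, f x ∂Q - Real.log (∫ x, Real.exp (f x) ∂P) := by
  have hn : (0:ℝ) ≤ n := Nat.cast_nonneg n
  have hd : Measurable (fun x ↦ (Q.rnDeriv P x).toReal) :=
    (Measure.measurable_rnDeriv Q P).ennreal_toReal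
  set f : X → ℝ := fun x ↦ if (Q.rnDeriv P x).toReal = 0 then -(n:ℝ)
    else max (min (Real.log ((Q.rnDeriv P x).toReal)) n) (-(n:ℝ)) with hfdef
  have hfm : Measurable f := by
    refine Measurable.ite (hd (measurableSet_singleton 0)) measurable_const ?_
    exact ((Real.measurable_log.comp hd).min measurable_const).max measurable_const
  have hfb : ∀ x, |f x| ≤ n := by
    intro x
    simp only [hfdef]
    split_ifs with h
    · rw [abs_neg, abs_of_nonneg hn]
    · exact dv_clamp_abs_le hn
  refine ⟨f, hfm, hfb, ?_⟩
  -- Q-a.e. equality with the clamp of llr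
  have hae : f =ᵐ[Q] fun x ↦ max (min (llr Q P x) n) (-(n:ℝ)) := by
    filter_upwards [Measure.rnDeriv_pos hQP, hQP.ae_le (Measure.rnDeriv_lt_top Q P)]
      with x h0 hlt
    have hdx : 0 < (Q.rnDeriv P x).toReal := ENNReal.toReal_pos h0.ne' hlt.ne
    simp only [hfdef]
    simp only [llr, if_neg hdx.ne']
  have hQeq : ∫ x, f x ∂Q = ∫ x, max (min (llr Q P x) n) (-(n:ℝ)) ∂Q :=
    integral_congr_ae hae
  -- exp bound
  have hexp : ∀ x, Real.exp (f x) ≤ (Q.rnDeriv P x).toReal + Real.exp (-(n:ℝ)) := by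
    intro x
    simp only [hfdef]
    split_ifs with h
    · exact le_add_of_nonneg_left ENNReal.toReal_nonneg
    · have hdx : 0 < (Q.rnDeriv P x).toReal :=
        lt_of_le_of_ne ENNReal.toReal_nonneg (Ne.symm h)
      have h1 : max (min (Real.log ((Q.rnDeriv P x).toReal)) n) (-(n:ℝ))
          ≤ max (Real.log ((Q.rnDeriv P x).toReal)) (-(n:ℝ)) :=
        max_le_max (min_le_left _ _) le_rfl
      calc Real.exp (max (min (Real.log ((Q.rnDeriv P x).toReal)) n) (-(n:ℝ)))
          ≤ Real.exp (max (Real.log ((Q.rnDeriv P x).toReal)) (-(n:ℝ))) :=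
            Real.exp_le_exp.2 h1
        _ = max (Real.exp (Real.log ((Q.rnDeriv P x).toReal))) (Real.exp (-(n:ℝ))) :=
            (Monotone.map_max (fun a b hab => Real.exp_le_exp.2 hab))
        _ = max ((Q.rnDeriv P x).toReal) (Real.exp (-(n:ℝ))) := by rw [Real.exp_log hdx]
        _ ≤ (Q.rnDeriv P x).toReal + Real.exp (-(n:ℝ)) :=
            max_le (le_add_of_nonneg_right (Real.exp_pos _).le)
              (le_add_of_nonneg_left ENNReal.toReal_nonneg)
  -- integral of exp f over P
  have hef : Integrable (fun x ↦ Real.exp (f x)) P := by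
    refine dv_integrable_of_bound P (Real.measurable_exp.comp hfm).aestronglyMeasurable
      (c := Real.exp n) (fun x => ?_)
    rw [abs_of_pos (Real.exp_pos _)]
    exact Real.exp_le_exp.2 (abs_le.1 (hfb x)).2
  have hrd : Integrable (fun x ↦ (Q.rnDeriv P x).toReal) P := Measure.integrable_toReal_rnDeriv
  have hePbound : ∫ x, Real.exp (f x) ∂P ≤ 1 + Real.exp (-(n:ℝ)) := by
    have h1 : ∫ x, Real.exp (f x) ∂P
        ≤ ∫ x, ((Q.rnDeriv P x).toReal + Real.exp (-(n:ℝ))) ∂P :=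
      integral_mono hef (hrd.add (integrable_const _)) hexp
    rw [integral_add hrd (integrable_const _), integral_const] at h1
    have h2 : ∫ x, (Q.rnDeriv P x).toReal ∂P = 1 := by
      rw [Measure.integral_toReal_rnDeriv hQP]; simp
    simp only [probReal_univ, ENNReal.toReal_one, smul_eq_mul, one_mul] at h1
    linarith
  have hefpos : 0 < ∫ x, Real.exp (f x) ∂P := integral_exp_pos hef
  have hlog : Real.log (∫ x, Real.exp (f x) ∂P) ≤ Real.exp (-(n:ℝ)) := by
    calc Real.log (∫ x, Real.exp (f x) ∂P) ≤ Real.log (1 + Real.exp (-(n:ℝ))) :=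
          Real.log_le_log hefpos hePbound
      _ ≤ (1 + Real.exp (-(n:ℝ))) - 1 := Real.log_le_sub_one_of_pos (by positivity)
      _ = Real.exp (-(n:ℝ)) := by ring
  rw [hQeq]
  linarith

end DVReach

section DVReach2
variable {X : Type*} [MeasurableSpace X]

lemma dv_tendsto_clamp (P Q : Measure X) [IsProbabilityMeasure P] [IsProbabilityMeasure Q]
    (hint : Integrable (llr Q P) Q) :
    Filter.Tendsto (fun n : ℕ ↦ ∫ x, max (min (llr Q P x) n) (-(n:ℝ)) ∂Q)
      Filter.atTop (nhds (∫ x, llr Q P x ∂Q)) := by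
  refine tendsto_integral_of_dominated_convergence (fun x ↦ |llr Q P x|)
    (fun n => (((measurable_llr Q P).min measurable_const).max
      measurable_const).aestronglyMeasurable)
    hint.abs (fun n => Filter.Eventually.of_forall fun x => ?_)
    (Filter.Eventually.of_forall fun x => ?_)
  · rw [Real.norm_eq_abs]
    exact dv_clamp_abs (Nat.cast_nonneg n)
  · have hev : ∀ᶠ (n : ℕ) in Filter.atTop,
        max (min (llr Q P x) n) (-(n:ℝ)) = llr Q P x := by
      filter_upwards [Filter.eventually_ge_atTop ⌈|llr Q P x|⌉₊] with n hn
      have h1 : |llr Q P x| ≤ (n:ℝ) := by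
        calc |llr Q P x| ≤ (⌈|llr Q P x|⌉₊ : ℝ) := Nat.le_ceil _
          _ ≤ (n:ℝ) := Nat.cast_le.2 hn
      rw [min_eq_left ((le_abs_self _).trans h1),
        max_eq_left (le_trans (neg_le_neg h1) (neg_abs_le _))]
    refine Filter.Tendsto.congr' ?_ tendsto_const_nhds
    filter_upwards [hev] with n hn
    exact hn.symm

lemma dv_unbounded_clamp (P Q : Measure X) [IsProbabilityMeasure P] [IsProbabilityMeasure Q]
    (hQP : Q ≪ P) (hni : ¬ Integrable (llr Q P) Q) (M : ℝ) :
    ∃ n : ℕ, M ≤ ∫ x, max (min (llr Q P x) n) (-(n:ℝ)) ∂Q := by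
  set pos : X → ℝ := fun x ↦ max (llr Q P x) 0 with hposdef
  have hposm : Measurable pos := (measurable_llr Q P).max measurable_const
  have hpos0 : ∀ x, 0 ≤ pos x := fun x => le_max_right _ _
  have hnpos : ¬ Integrable pos Q := by
    intro h
    apply hni
    have h2 := h.add (dv_integrable_min hQP)
    have h3 : pos + (fun x => min (llr Q P x) 0) = llr Q P := by
      funext x
      simp only [Pi.add_apply, hposdef]
      rw [max_add_min, add_zero]
    rwa [h3] at h2
  have htop : ∫⁻ x, ENNReal.ofReal (pos x) ∂Q = ⊤ := by
    by_contra h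
    apply hnpos
    refine ⟨hposm.aestronglyMeasurable, ?_⟩
    rw [hasFiniteIntegral_iff_norm]
    have heq : ∀ x, ENNReal.ofReal ‖pos x‖ = ENNReal.ofReal (pos x) := fun x => by
      rw [Real.norm_eq_abs, abs_of_nonneg (hpos0 x)]
    simp only [heq]
    exact lt_top_iff_ne_top.2 h
  -- sup over truncations is infinite
  have hmin_meas : ∀ n : ℕ, Measurable fun x => min (ENNReal.ofReal (pos x)) n :=
    fun n => (hposm.ennreal_ofReal).min measurable_const
  have hsup : ⨆ n : ℕ, ∫⁻ x, min (ENNReal.ofReal (pos x)) n ∂Q = ⊤ := by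
    rw [← lintegral_iSup hmin_meas]
    · have hpt : (fun x => ⨆ n : ℕ, min (ENNReal.ofReal (pos x)) n)
          = fun x => ENNReal.ofReal (pos x) := by
        funext x
        rcases eq_or_ne (ENNReal.ofReal (pos x)) ⊤ with h | h
        · rw [h]
          simp only [min_eq_right le_top, h]
          · exact ENNReal.iSup_natCast
        · refine le_antisymm (iSup_le fun n => min_le_left _ _) ?_
          obtain ⟨n, hn⟩ := ENNReal.exists_nat_gt h
          calc ENNReal.ofReal (pos x) = min (ENNReal.ofReal (pos x)) n :=
                (min_eq_left hn.le).symm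
            _ ≤ ⨆ n : ℕ, min (ENNReal.ofReal (pos x)) n :=
                le_iSup (fun n : ℕ => min (ENNReal.ofReal (pos x)) (n:ℝ≥0∞)) n
      rw [hpt, htop]
    · intro m k hmk x
      exact min_le_min le_rfl (Nat.cast_le.2 hmk)
  have hM : ∃ n : ℕ, ENNReal.ofReal (max M 0 + 2) < ∫⁻ x, min (ENNReal.ofReal (pos x)) n ∂Q := by
    by_contra h
    push_neg at h
    have := iSup_le h
    rw [hsup] at this
    exact (lt_irrefl ⊤ (lt_of_le_of_lt this (ENNReal.ofReal_lt_top))).elim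
  obtain ⟨n, hn⟩ := hM
  refine ⟨n, ?_⟩
  -- real integral of min (pos) n
  have hminb : ∀ x, min (pos x) n ∈ Set.Icc (0:ℝ) n := fun x =>
    ⟨le_min (hpos0 x) (Nat.cast_nonneg n), min_le_right _ _⟩
  have hminm : Measurable fun x => min (pos x) n := hposm.min measurable_const
  have hofmin : ∀ x, ENNReal.ofReal (min (pos x) n) = min (ENNReal.ofReal (pos x)) n := by
    intro x
    rcases le_total (pos x) (n:ℝ) with h | h
    · rw [min_eq_left h, min_eq_left]
      calc ENNReal.ofReal (pos x) ≤ ENNReal.ofReal n := ENNReal.ofReal_le_ofReal h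
        _ = (n : ℝ≥0∞) := ENNReal.ofReal_natCast n
    · rw [min_eq_right h, min_eq_right, ENNReal.ofReal_natCast]
      rw [← ENNReal.ofReal_natCast]
      exact ENNReal.ofReal_le_ofReal h
  have hlint_lt : ∫⁻ x, min (ENNReal.ofReal (pos x)) n ∂Q ≠ ⊤ := by
    refine ne_top_of_le_ne_top (ENNReal.natCast_ne_top n) ?_
    calc ∫⁻ x, min (ENNReal.ofReal (pos x)) n ∂Q ≤ ∫⁻ _, (n:ℝ≥0∞) ∂Q :=
          lintegral_mono fun x => min_le_right _ _
      _ = (n:ℝ≥0∞) := by simp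
  have hreal : ∫ x, min (pos x) n ∂Q = (∫⁻ x, min (ENNReal.ofReal (pos x)) n ∂Q).toReal := by
    rw [integral_eq_lintegral_of_nonneg_ae (Filter.Eventually.of_forall fun x => (hminb x).1)
      hminm.aestronglyMeasurable]
    congr 1
    exact lintegral_congr fun x => hofmin x
  have hMn : max M 0 + 2 ≤ ∫ x, min (pos x) n ∂Q := by
    rw [hreal]
    have := ENNReal.toReal_mono hlint_lt hn.le
    rwa [ENNReal.toReal_ofReal (by positivity)] at this
  -- compare with the clamp integral
  have hint_min : Integrable (fun x => min (pos x) n) Q :=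
    dv_integrable_of_bound Q hminm.aestronglyMeasurable (c := n) (fun x =>
      abs_le.2 ⟨by linarith [(hminb x).1, Nat.cast_nonneg (α := ℝ) n], (hminb x).2⟩)
  have hint_sum : Integrable (fun x => min (pos x) n + min (llr Q P x) 0) Q :=
    hint_min.add (dv_integrable_min hQP)
  have hint_clamp : Integrable (fun x => max (min (llr Q P x) n) (-(n:ℝ))) Q :=
    dv_integrable_of_bound Q
      (((measurable_llr Q P).min measurable_const).max measurable_const).aestronglyMeasurable
      (fun x => dv_clamp_abs_le (Nat.cast_nonneg n))
  have hptwise : ∀ x, min (pos x) n + min (llr Q P x) 0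
      ≤ max (min (llr Q P x) n) (-(n:ℝ)) := by
    intro x
    simp only [hposdef]
    rcases le_total 0 (llr Q P x) with h | h
    · rw [max_eq_left h, min_eq_right h, add_zero]
      exact le_max_left _ _
    · rw [max_eq_right h, min_eq_left h]
      have h0 : min (0:ℝ) (n:ℝ) = 0 := min_eq_left (Nat.cast_nonneg n)
      rw [h0, zero_add]
      calc llr Q P x = min (llr Q P x) (n:ℝ) :=
            (min_eq_left (h.trans (Nat.cast_nonneg n))).symm
        _ ≤ max (min (llr Q P x) (n:ℝ)) (-(n:ℝ)) := le_max_left _ _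
  have hfinal : ∫ x, (min (pos x) n + min (llr Q P x) 0) ∂Q
      ≤ ∫ x, max (min (llr Q P x) n) (-(n:ℝ)) ∂Q :=
    integral_mono hint_sum hint_clamp hptwise
  rw [integral_add hint_min (dv_integrable_min hQP)] at hfinal
  have hmge := dv_integral_min_ge hQP
  have hMmax : M ≤ max M 0 := le_max_left M 0
  linarith [hMn]

end DVReach2

section DVNotAC
variable {X : Type*} [MeasurableSpace X]

lemma dv_reach_nonac (P Q : Measure X) [IsProbabilityMeasure P] [IsProbabilityMeasure Q]
    (hQP : ¬ Q ≪ P) (M : ℝ) :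
    ∃ f : X → ℝ, Measurable f ∧ (∃ c : ℝ, 0 ≤ c ∧ ∀ x, |f x| ≤ c) ∧
      M ≤ ∫ x, f x ∂Q - Real.log (∫ x, Real.exp (f x) ∂P) := by
  have h1 : ¬ ∀ ⦃s : Set X⦄, P s = 0 → Q s = 0 :=
    fun hh => hQP (Measure.AbsolutelyContinuous.mk fun s _ h => hh h)
  push_neg at h1
  obtain ⟨s, hsP, hsQ⟩ := h1
  set A := toMeasurable P s with hA
  have hAm : MeasurableSet A := measurableSet_toMeasurable P s
  have hAP : P A = 0 := by rw [hA, measure_toMeasurable]; exact hsP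
  have hAQ : Q A ≠ 0 := fun h => hsQ (measure_mono_null (subset_toMeasurable P s) h)
  have hAQpos : 0 < (Q A).toReal :=
    ENNReal.toReal_pos hAQ (measure_ne_top Q A)
  set c := (max M 0 + 1) / (Q A).toReal with hc
  have hcpos : 0 < c := div_pos (by have := le_max_right M 0; linarith) hAQpos
  refine ⟨A.indicator fun _ => c, measurable_const.indicator hAm,
    ⟨c, hcpos.le, fun x => ?_⟩, ?_⟩
  · rcases Set.indicator_eq_zero_or_self A (fun _ => c) x with h | h <;> rw [h]
    · simpa using hcpos.le
    · rw [abs_of_pos hcpos]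
  · have hQint : ∫ x, A.indicator (fun _ => c) x ∂Q = (Q A).toReal * c := by
      rw [integral_indicator_const _ hAm]
      simp [mul_comm, measureReal_def]
    have hPae : ∀ᵐ x ∂P, x ∉ A := by
      rw [ae_iff]
      simpa using hAP
    have hPexp : ∫ x, Real.exp (A.indicator (fun _ => c) x) ∂P = 1 := by
      have heq : (fun x => Real.exp (A.indicator (fun _ => c) x)) =ᵐ[P] fun _ => 1 := by
        filter_upwards [hPae] with x hx
        rw [Set.indicator_of_notMem hx, Real.exp_zero]
      rw [integral_congr_ae heq]
      simp
    rw [hQint, hPexp, Real.log_one, sub_zero, hc, mul_comm,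
      div_mul_cancel₀ _ (ne_of_gt hAQpos)]
    have := le_max_left M 0
    linarith

end DVNotAC
end DVProofs

/-- Relative entropy `H(Q|P) = ∫ log(dQ/dP) dQ` if `Q ≪ P` (and the log-likelihood
ratio is integrable), `+∞` otherwise. -/
noncomputable def relEntropy {α : Type*} [MeasurableSpace α] (Q P : Measure α) : ℝ≥0∞ :=
  if Q ≪ P ∧ Integrable (llr Q P) Q then ENNReal.ofReal (∫ x, llr Q P x ∂Q) else ⊤

/-- Donsker–Varadhan variational representation of the relative entropy on a Polish
space: `H(Q|P) = sup_{f ∈ C_b(X)} ( ∫ f dQ − log ∫ e^f dP )`. -/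
theorem stmt14 {X : Type*}
    [MetricSpace X] [CompleteSpace X] [TopologicalSpace.SeparableSpace X]
    [MeasurableSpace X] [BorelSpace X]
    (P Q : Measure X) [IsProbabilityMeasure P] [IsProbabilityMeasure Q] :
    (relEntropy Q P : EReal)
      = ⨆ f : X →ᵇ ℝ,
          (((∫ x, f x ∂Q - Real.log (∫ x, Real.exp (f x) ∂P) : ℝ)) : EReal) := by
  classical
  have hle_S : ∀ g : X →ᵇ ℝ,
      ((∫ x, g x ∂Q - Real.log (∫ x, Real.exp (g x) ∂P) : ℝ) : EReal)
        ≤ ⨆ f : X →ᵇ ℝ,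
            (((∫ x, f x ∂Q - Real.log (∫ x, Real.exp (f x) ∂P) : ℝ)) : EReal) :=
    fun g => le_iSup
      (fun f : X →ᵇ ℝ =>
        (((∫ x, f x ∂Q - Real.log (∫ x, Real.exp (f x) ∂P) : ℝ)) : EReal)) g
  by_cases h : Q ≪ P ∧ Integrable (llr Q P) Q
  · obtain ⟨hQP, hint⟩ := h
    have hre : relEntropy Q P = ENNReal.ofReal (∫ x, llr Q P x ∂Q) := by
      rw [relEntropy]; exact if_pos ⟨hQP, hint⟩
    have hI0 : 0 ≤ ∫ x, llr Q P x ∂Q := dv_integral_llr_nonneg hQP hint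
    rw [hre, EReal.coe_ennreal_ofReal, max_eq_left hI0]
    -- reach lemma
    have hreach : ∀ ε : ℝ, 0 < ε → ∃ g : X →ᵇ ℝ,
        ∫ x, llr Q P x ∂Q - ε ≤ ∫ x, g x ∂Q - Real.log (∫ x, Real.exp (g x) ∂P) := by
      intro ε hε
      have h1 := dv_tendsto_clamp P Q hint
      have h2 : Filter.Tendsto (fun n : ℕ => Real.exp (-(n:ℝ))) Filter.atTop (nhds 0) :=
        Real.tendsto_exp_neg_atTop_nhds_zero.comp tendsto_natCast_atTop_atTop
      obtain ⟨N₁, hN₁⟩ := Metric.tendsto_atTop.1 h1 (ε/3) (by linarith)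
      obtain ⟨N₂, hN₂⟩ := Metric.tendsto_atTop.1 h2 (ε/3) (by linarith)
      set n := max N₁ N₂
      have hd1 := hN₁ n (le_max_left _ _)
      have hd2 := hN₂ n (le_max_right _ _)
      rw [Real.dist_eq] at hd1 hd2
      obtain ⟨f, hfm, hfb, hval⟩ := dv_reach_ac P Q hQP n
      obtain ⟨g, hg⟩ := dv_approx P Q hfm (Nat.cast_nonneg n) hfb
        (show (0:ℝ) < ε/3 by linarith)
      refine ⟨g, ?_⟩
      have ha1 := abs_lt.1 hd1
      have ha2 := abs_lt.1 hd2
      simp only [sub_zero] at ha2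
      linarith
    apply le_antisymm
    · apply le_of_forall_lt
      intro c hc
      induction c using EReal.rec with
      | bot => exact lt_of_lt_of_le (EReal.bot_lt_coe _) (hle_S 0)
      | coe r =>
        rw [EReal.coe_lt_coe_iff] at hc
        obtain ⟨g, hg⟩ := hreach ((∫ x, llr Q P x ∂Q - r)/2) (by linarith)
        refine lt_of_lt_of_le ?_ (hle_S g)
        rw [EReal.coe_lt_coe_iff]
        linarith
      | top => exact absurd hc (by simp)
    · refine iSup_le fun g => ?_
      rw [EReal.coe_le_coe_iff]
      refine dv_le_entropy P Q hQP hint g.continuous.measurable (c := ‖g‖) fun x => ?_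
      simpa [Real.norm_eq_abs] using g.norm_coe_le_norm x
  · have hre : relEntropy Q P = ⊤ := by rw [relEntropy]; exact if_neg h
    rw [hre, EReal.coe_ennreal_top]
    symm
    rw [EReal.eq_top_iff_forall_lt]
    intro y
    have hex : ∃ f : X → ℝ, Measurable f ∧ (∃ c : ℝ, 0 ≤ c ∧ ∀ x, |f x| ≤ c) ∧
        y + 2 ≤ ∫ x, f x ∂Q - Real.log (∫ x, Real.exp (f x) ∂P) := by
      by_cases hQP : Q ≪ P
      · have hni : ¬ Integrable (llr Q P) Q := fun hi => h ⟨hQP, hi⟩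
        obtain ⟨n, hn⟩ := dv_unbounded_clamp P Q hQP hni (y + 3)
        obtain ⟨f, hfm, hfb, hval⟩ := dv_reach_ac P Q hQP n
        refine ⟨f, hfm, ⟨n, Nat.cast_nonneg n, hfb⟩, ?_⟩
        have hee : Real.exp (-(n:ℝ)) ≤ 1 := by
          have h3 := Real.exp_le_exp.2 (neg_nonpos.2 (Nat.cast_nonneg (α := ℝ) n))
          rwa [Real.exp_zero] at h3
        linarith
      · obtain ⟨f, hfm, hfb, hval⟩ := dv_reach_nonac P Q hQP (y + 2)
        exact ⟨f, hfm, hfb, hval⟩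
    obtain ⟨f, hfm, ⟨c, hc0, hfb⟩, hval⟩ := hex
    obtain ⟨g, hg⟩ := dv_approx P Q hfm hc0 hfb one_pos
    calc (y : EReal) < ((∫ x, g x ∂Q - Real.log (∫ x, Real.exp (g x) ∂P) : ℝ) : EReal) :=
          EReal.coe_lt_coe_iff.2 (by linarith)
      _ ≤ _ := hle_S g
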